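/- For every ε with 1/3 < ε < 1, the middle-ε Cantor set M_ε contains no arithmetic progression of length 3; that is, there are no a ∈ ℝ and t > 0 with a, a + t, and a + 2t all in M_ε. -/

import Mathlib

/-- The middle-`ε` Cantor set. -/
noncomputable def middleCantor (ε : ℝ) : Set ℝ :=
  {x | ∃ b : ℕ → Bool,
    x = (1 - (1 - ε) / 2) * ∑' n : ℕ, (if b n then ((1 - ε) / 2) ^ n else 0)}

namespace MCaux

noncomputable def f (l : ℝ) (b : ℕ → Bool) : ℝ :=
  (1 - l) * ∑' n : ℕ, (if b n then l ^ n else 0)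

lemma summ {l : ℝ} (hl0 : 0 < l) (hl1 : l < 1) (b : ℕ → Bool) :
    Summable (fun n : ℕ => (if b n then l ^ n else 0 : ℝ)) := by
  apply Summable.of_nonneg_of_le (fun n => ?_) (fun n => ?_)
    (summable_geometric_of_lt_one hl0.le hl1)
  · split <;> positivity
  · split
    · exact le_rfl
    · positivity

lemma f_nonneg {l : ℝ} (hl0 : 0 < l) (hl1 : l < 1) (b : ℕ → Bool) : 0 ≤ f l b := by
  apply mul_nonneg (by linarith)
  apply tsum_nonneg
  intro n; split <;> positivity

lemma f_le_one {l : ℝ} (hl0 : 0 < l) (hl1 : l < 1) (b : ℕ → Bool) : f l b ≤ 1 := by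
  have h := Summable.tsum_le_tsum (f := fun n : ℕ => (if b n then l ^ n else 0 : ℝ))
    (g := fun n : ℕ => l ^ n) (fun n => by split; exacts [le_rfl, by positivity])
    (summ hl0 hl1 b) (summable_geometric_of_lt_one hl0.le hl1)
  rw [tsum_geometric_of_lt_one hl0.le hl1] at h
  have h1 : (0:ℝ) < 1 - l := by linarith
  calc f l b ≤ (1 - l) * (1 - l)⁻¹ := by
        exact mul_le_mul_of_nonneg_left h h1.le
    _ = 1 := mul_inv_cancel₀ h1.ne'

lemma f_shift {l : ℝ} (hl0 : 0 < l) (hl1 : l < 1) (b : ℕ → Bool) :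
    f l b = (if b 0 then (1 - l) else 0) + l * f l (fun n => b (n + 1)) := by
  unfold f
  rw [Summable.tsum_eq_zero_add (summ hl0 hl1 b)]
  have : ∑' n : ℕ, (if b (n + 1) then l ^ (n + 1) else 0 : ℝ)
      = l * ∑' n : ℕ, (if b (n + 1) then l ^ n else 0 : ℝ) := by
    rw [← tsum_mul_left]
    congr 1; funext n; split <;> ring
  rw [this]
  split <;> ring

lemma f_lo {l : ℝ} (hl0 : 0 < l) (hl1 : l < 1) (b : ℕ → Bool) (hb : b 0 = false) :
    f l b ≤ l := by
  rw [f_shift hl0 hl1 b, hb]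
  simp only [if_neg Bool.false_ne_true, zero_add]
  calc l * f l (fun n => b (n + 1)) ≤ l * 1 :=
        mul_le_mul_of_nonneg_left (f_le_one hl0 hl1 _) hl0.le
    _ = l := mul_one l

lemma f_hi {l : ℝ} (hl0 : 0 < l) (hl1 : l < 1) (b : ℕ → Bool) (hb : b 0 = true) :
    1 - l ≤ f l b := by
  rw [f_shift hl0 hl1 b, hb]
  simp only [if_pos]
  have := mul_nonneg hl0.le (f_nonneg hl0 hl1 (fun n => b (n + 1)))
  linarith

lemma key {l : ℝ} (hl0 : 0 < l) (hl3 : l < 1 / 3) :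
    ∀ N : ℕ, ∀ b c d : ℕ → Bool, f l b < f l c → f l b + f l c = 2 * f l d →
      b N ≠ c N → (∀ n < N, b n = c n) → False := by
  have hl1 : l < 1 := by linarith
  intro N
  induction N with
  | zero =>
    intro b c d hlt heq hne _
    have hx0 : 0 ≤ f l b := f_nonneg hl0 hl1 b
    have hz1 : f l c ≤ 1 := f_le_one hl0 hl1 c
    have hb0 : b 0 = false := by
      by_contra h
      have hb : b 0 = true := by revert h; cases b 0 <;> simp
      have hc : c 0 = false := by revert hne; rw [hb]; cases c 0 <;> simp
      have := f_hi hl0 hl1 b hb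
      have := f_lo hl0 hl1 c hc
      linarith
    have hc0 : c 0 = true := by revert hne; rw [hb0]; cases c 0 <;> simp
    have h1 := f_lo hl0 hl1 b hb0
    have h2 := f_hi hl0 hl1 c hc0
    cases hd : d 0 with
    | false =>
      have := f_lo hl0 hl1 d hd
      linarith
    | true =>
      have := f_hi hl0 hl1 d hd
      linarith
  | succ N ih =>
    intro b c d hlt heq hne hagree
    have hbc0 : b 0 = c 0 := hagree 0 (Nat.succ_pos N)
    -- y is between x and z
    have hd0 : d 0 = b 0 := by
      cases hb : b 0 with
      | false =>
        have h1 := f_lo hl0 hl1 c (hbc0 ▸ hb)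
        by_contra h
        have hd : d 0 = true := by revert h; cases d 0 <;> simp [hb]
        have h2 := f_hi hl0 hl1 d hd
        linarith
      | true =>
        have h1 := f_hi hl0 hl1 b hb
        by_contra h
        have hd : d 0 = false := by revert h; cases d 0 <;> simp [hb]
        have h2 := f_lo hl0 hl1 d hd
        linarith
    have eb := f_shift hl0 hl1 b
    have ec := f_shift hl0 hl1 c
    have ed := f_shift hl0 hl1 d
    rw [hbc0] at eb
    rw [hd0, hbc0] at ed
    set e : ℝ := if c 0 then (1 - l) else 0 with he
    apply ih (fun n => b (n + 1)) (fun n => c (n + 1)) (fun n => d (n + 1))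
    · rw [eb, ec] at hlt
      have := (mul_lt_mul_iff_right₀ hl0).mp (by linarith : l * f l (fun n => b (n+1)) < l * f l (fun n => c (n+1)))
      exact this
    · rw [eb, ec, ed] at heq
      have : l * (f l (fun n => b (n+1)) + f l (fun n => c (n+1))) = l * (2 * f l (fun n => d (n+1))) := by ring_nf; ring_nf at heq; linarith
      exact mul_left_cancel₀ hl0.ne' this
    · exact hne
    · intro n hn; exact hagree (n + 1) (Nat.succ_lt_succ hn)

end MCaux

theorem stmt16 (ε : ℝ) (h1 : 1 / 3 < ε) (h2 : ε < 1) :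
    ¬ ∃ a t : ℝ, 0 < t ∧ a ∈ middleCantor ε ∧ a + t ∈ middleCantor ε ∧
      a + 2 * t ∈ middleCantor ε := by
  rintro ⟨a, t, ht, ⟨b, hb⟩, ⟨d, hd⟩, ⟨c, hc⟩⟩
  set l : ℝ := (1 - ε) / 2 with hl
  have hl0 : 0 < l := by unfold l; linarith
  have hl3 : l < 1 / 3 := by unfold l; linarith
  have hxb : a = MCaux.f l b := hb
  have hyd : a + t = MCaux.f l d := hd
  have hzc : a + 2 * t = MCaux.f l c := hc
  have hlt : MCaux.f l b < MCaux.f l c := by rw [← hxb, ← hzc]; linarith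
  have heq : MCaux.f l b + MCaux.f l c = 2 * MCaux.f l d := by
    rw [← hxb, ← hzc, ← hyd]; ring
  have hne : b ≠ c := by
    intro h; rw [h] at hlt; exact lt_irrefl _ hlt
  have hex : ∃ n, b n ≠ c n := Function.ne_iff.mp hne
  exact MCaux.key hl0 hl3 (Nat.find hex) b c d hlt heq (Nat.find_spec hex)
    (fun n hn => by
      by_contra h
      exact Nat.find_min hex hn h)
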